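/- Let g ≥ 1, let B be a free ℤ-module with basis (b_j)_{j=1,…,g} and A := Hom_ℤ(B, ℤ) with dual basis (a_j). In the tensor algebra T₀ of B, with canonical linear map ι : B → T₀, ring commutator ⁅u,v⁆ = uv − vu, and L : B ⊗ B → T₀ the linear map with L(x ⊗ y) = ⁅ι(x), ι(y)⁆, say that a pair (h, μ), where h is a ℤ-linear automorphism of B and μ : A → B ⊗ B a linear map with antisymmetric values, belongs to 𝒢 if ∑_{j=1}^g ⁅ι(h(b_j)), L(μ(a_j))⁆ = 0. Then 𝒢 is closed under the multiplication (h, μ)(f, ν) := (h ∘ f, (h ⊗ h) ∘ ν + μ ∘ f′) (where f′ is the transpose of f⁻¹ acting on A) and under the inversion (h, μ)⁻¹ := (h⁻¹, −(h⁻¹ ⊗ h⁻¹) ∘ μ ∘ h*), and it contains the identity (id_B, 0); that is, 𝒢 is a subgroup of Aut(B) × Hom(A, Λ²B). -/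

import Mathlib

open TensorProduct

noncomputable section

variable {g : ℕ} {B : Type*} [AddCommGroup B] [Module ℤ B]

/-- Membership in the set 𝒢: the pair (h, μ) — h an automorphism of B, μ : A → B ⊗ B a
linear map with antisymmetric values, A = Dual ℤ B — satisfies
∑_j ⁅ι(h(b_j)), L(μ(a_j))⁆ = 0, where (a_j) = (b.coord j) is the dual basis of (b_j),
ι is the inclusion of B into its tensor algebra, and L(x ⊗ y) = ⁅ι x, ι y⁆. -/
def memG (b : Module.Basis (Fin g) ℤ B) (L : B ⊗[ℤ] B →ₗ[ℤ] TensorAlgebra ℤ B)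
    (p : (B ≃ₗ[ℤ] B) × (Module.Dual ℤ B →ₗ[ℤ] B ⊗[ℤ] B)) : Prop :=
  (∀ c : Module.Dual ℤ B, TensorProduct.comm ℤ B B (p.2 c) = - p.2 c) ∧
  ∑ j : Fin g, ⁅TensorAlgebra.ι ℤ (p.1 (b j)), L (p.2 (b.coord j))⁆ = 0

/-- The sum ∑_j T(c_j, c^j) over a basis and its dual basis does not depend on the basis. -/
lemma sum_indep {R M V : Type*} [CommRing R] [AddCommGroup M] [Module R M]
    [AddCommGroup V] [Module R V]
    (b c : Module.Basis (Fin g) R M) (T : M →ₗ[R] Module.Dual R M →ₗ[R] V) :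
    ∑ j, T (c j) (c.coord j) = ∑ j, T (b j) (b.coord j) := by
  have key : ∀ i k : Fin g, (∑ j, b.repr (c j) i * (c.coord j) (b k))
      = if k = i then 1 else 0 := by
    intro i k
    have h1 := c.sum_repr (b k)
    have h2 : b.repr (b k) i = ∑ j, c.repr (b k) j * b.repr (c j) i := by
      conv_lhs => rw [← h1]
      simp [-Module.Basis.sum_repr]
    calc ∑ j, b.repr (c j) i * (c.coord j) (b k)
        = ∑ j, c.repr (b k) j * b.repr (c j) i := by
          refine Finset.sum_congr rfl fun j _ => ?_
          rw [Module.Basis.coord_apply, mul_comm]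
      _ = if k = i then 1 else 0 := by
          rw [← h2, b.repr_self, Finsupp.single_apply]
  have expand : ∀ (x : M) (φ : Module.Dual R M), T x φ
      = ∑ i, ∑ k, (b.repr x i * φ (b k)) • T (b i) (b.coord k) := by
    intro x φ
    conv_lhs => rw [← b.sum_dual_apply_smul_coord φ]
    rw [map_sum]
    have e2 : ∀ k, T x ((φ (b k)) • b.coord k)
        = ∑ i, (b.repr x i * φ (b k)) • T (b i) (b.coord k) := by
      intro k
      rw [(T x).map_smul]
      conv_lhs => rw [← b.sum_repr x]
      rw [map_sum, LinearMap.sum_apply, Finset.smul_sum]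
      refine Finset.sum_congr rfl fun i _ => ?_
      rw [T.map_smul, LinearMap.smul_apply, smul_smul, mul_comm (φ (b k))]
    simp only [e2]
    rw [Finset.sum_comm]
  calc ∑ j, T (c j) (c.coord j)
      = ∑ j, ∑ i, ∑ k, (b.repr (c j) i * (c.coord j) (b k)) • T (b i) (b.coord k) := by
        exact Finset.sum_congr rfl fun j _ => expand (c j) (c.coord j)
    _ = ∑ i, ∑ k, (∑ j, b.repr (c j) i * (c.coord j) (b k)) • T (b i) (b.coord k) := by
        rw [Finset.sum_comm]
        refine Finset.sum_congr rfl fun i _ => ?_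
        rw [Finset.sum_comm]
        refine Finset.sum_congr rfl fun k _ => ?_
        exact (Finset.sum_smul).symm
    _ = ∑ i, T (b i) (b.coord i) := by
        refine Finset.sum_congr rfl fun i _ => ?_
        simp only [key]
        simp [Finset.sum_ite_eq]

lemma coord_map (b : Module.Basis (Fin g) ℤ B) (e : B ≃ₗ[ℤ] B) (j : Fin g) :
    (b.map e).coord j = e.symm.toLinearMap.dualMap (b.coord j) := by
  ext x
  simp [Module.Basis.coord_apply, Module.Basis.map_repr]

/-- 𝒢 contains the identity (id_B, 0), is closed under the multiplication
(h, μ)(f, ν) = (h ∘ f, (h ⊗ h) ∘ ν + μ ∘ f′) (f′ the transpose of f⁻¹), and is closed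
under the inversion (h, μ)⁻¹ = (h⁻¹, −(h⁻¹ ⊗ h⁻¹) ∘ μ ∘ h*); that is, 𝒢 is a subgroup
of Aut(B) × Hom(A, Λ²B). -/
theorem stmt15 (g : ℕ) (hg : 1 ≤ g) (B : Type*) [AddCommGroup B] [Module ℤ B]
    (b : Module.Basis (Fin g) ℤ B)
    (L : B ⊗[ℤ] B →ₗ[ℤ] TensorAlgebra ℤ B)
    (hL : ∀ x y : B, L (x ⊗ₜ[ℤ] y) = ⁅TensorAlgebra.ι ℤ x, TensorAlgebra.ι ℤ y⁆) :
    memG b L (LinearEquiv.refl ℤ B, 0) ∧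
    (∀ p q, memG b L p → memG b L q →
      memG b L
        (q.1.trans p.1,
         (TensorProduct.map p.1.toLinearMap p.1.toLinearMap : B ⊗[ℤ] B →ₗ[ℤ] B ⊗[ℤ] B) ∘ₗ q.2
           + p.2 ∘ₗ q.1.symm.toLinearMap.dualMap)) ∧
    (∀ p, memG b L p →
      memG b L
        (p.1.symm,
         -(TensorProduct.map p.1.symm.toLinearMap p.1.symm.toLinearMap ∘ₗ p.2
             ∘ₗ p.1.toLinearMap.dualMap : Module.Dual ℤ B →ₗ[ℤ] B ⊗[ℤ] B))) := by
  letI : LieRing (TensorAlgebra ℤ B) := LieRing.ofAssociativeRing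
  -- the algebra endomorphism of the tensor algebra induced by a linear endomorphism
  let Φ : (B →ₗ[ℤ] B) → (TensorAlgebra ℤ B →ₐ[ℤ] TensorAlgebra ℤ B) :=
    fun h => TensorAlgebra.lift ℤ ((TensorAlgebra.ι ℤ).comp h)
  have Φι : ∀ (h : B →ₗ[ℤ] B) (x : B), Φ h (TensorAlgebra.ι ℤ x) = TensorAlgebra.ι ℤ (h x) :=
    fun h x => by exact TensorAlgebra.lift_ι_apply _ x
  have Φlie : ∀ (h : B →ₗ[ℤ] B) (u v : TensorAlgebra ℤ B), Φ h ⁅u, v⁆ = ⁅Φ h u, Φ h v⁆ := by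
    intro h u v
    simp [Ring.lie_def, map_sub, map_mul]
  have ΦL : ∀ (h : B →ₗ[ℤ] B) (t : B ⊗[ℤ] B),
      Φ h (L t) = L (TensorProduct.map h h t) := by
    intro h t
    induction t using TensorProduct.induction_on with
    | zero => simp
    | tmul x y => rw [hL, Φlie, Φι, Φι, TensorProduct.map_tmul, hL]
    | add x y hx hy => simp [map_add, hx, hy]
  have commmap : ∀ (h : B →ₗ[ℤ] B) (t : B ⊗[ℤ] B),
      TensorProduct.comm ℤ B B (TensorProduct.map h h t)
        = TensorProduct.map h h (TensorProduct.comm ℤ B B t) := by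
    intro h t
    induction t using TensorProduct.induction_on with
    | zero => simp
    | tmul x y => simp
    | add x y hx hy => simp [map_add, hx, hy]
  -- bilinear map (x, φ) ↦ ⁅ι (h x), L (μ φ)⁆
  have Tdef : ∀ (h : B →ₗ[ℤ] B) (μ : Module.Dual ℤ B →ₗ[ℤ] B ⊗[ℤ] B),
      ∃ T : B →ₗ[ℤ] Module.Dual ℤ B →ₗ[ℤ] TensorAlgebra ℤ B,
        ∀ x φ, T x φ = ⁅TensorAlgebra.ι ℤ (h x), L (μ φ)⁆ := by
    intro h μ
    refine ⟨{
      toFun := fun x => {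
        toFun := fun φ => ⁅TensorAlgebra.ι ℤ (h x), L (μ φ)⁆
        map_add' := fun φ ψ => by simp only [map_add, lie_add]
        map_smul' := fun r φ => by
          simp only [μ.map_smul, L.map_smul, RingHom.id_apply, lie_smul] }
      map_add' := fun x y => by ext φ; simp only [map_add, add_lie, LinearMap.coe_mk,
        AddHom.coe_mk, LinearMap.add_apply]
      map_smul' := fun r x => by
        ext φ
        simp only [h.map_smul, (TensorAlgebra.ι ℤ).map_smul, smul_lie, RingHom.id_apply,
          LinearMap.coe_mk, AddHom.coe_mk, LinearMap.smul_apply] }, fun x φ => rfl⟩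
  refine ⟨⟨by simp, by simp⟩, ?_, ?_⟩
  · rintro ⟨h, μ⟩ ⟨f, ν⟩ ⟨hμa, hμs⟩ ⟨hνa, hνs⟩
    simp only at hμs hνs hμa hνa
    constructor
    · intro c
      simp only [LinearMap.add_apply, LinearMap.coe_comp, Function.comp_apply,
        LinearMap.restrictScalars_apply, map_add]
      rw [commmap, hνa, hμa (f.symm.toLinearMap.dualMap c)]
      simp only [map_neg]
      abel
    · simp only [LinearMap.add_apply, LinearMap.coe_comp, Function.comp_apply,
        LinearMap.restrictScalars_apply, LinearEquiv.trans_apply, map_add, lie_add,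
        Finset.sum_add_distrib]
      have term1 : (∑ j : Fin g, ⁅TensorAlgebra.ι ℤ (h (f (b j))),
          L (TensorProduct.map h.toLinearMap h.toLinearMap (ν (b.coord j)))⁆) = 0 := by
        have e : ∀ j : Fin g, ⁅TensorAlgebra.ι ℤ (h (f (b j))),
            L (TensorProduct.map h.toLinearMap h.toLinearMap (ν (b.coord j)))⁆
            = Φ h.toLinearMap ⁅TensorAlgebra.ι ℤ (f (b j)), L (ν (b.coord j))⁆ := by
          intro j
          rw [Φlie, Φι, ΦL]
          rfl
        simp only [e]
        rw [← map_sum, hνs, map_zero]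
      have term2 : (∑ j : Fin g, ⁅TensorAlgebra.ι ℤ (h (f (b j))),
          L (μ (f.symm.toLinearMap.dualMap (b.coord j)))⁆) = 0 := by
        obtain ⟨T, hT⟩ := Tdef h.toLinearMap μ
        have e1 : ∑ j : Fin g, T ((b.map f) j) ((b.map f).coord j)
            = ∑ j : Fin g, T (b j) (b.coord j) := sum_indep b (b.map f) T
        simp only [Module.Basis.map_apply, coord_map, hT, LinearEquiv.coe_coe] at e1
        rw [e1]
        exact hμs
      rw [term1, term2, add_zero]
  · rintro ⟨h, μ⟩ ⟨hμa, hμs⟩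
    simp only at hμa hμs
    constructor
    · intro c
      simp only [LinearMap.neg_apply, LinearMap.coe_comp, Function.comp_apply,
        LinearMap.restrictScalars_apply, map_neg]
      rw [commmap, hμa (h.toLinearMap.dualMap c)]
      simp only [map_neg, neg_neg]
    · simp only [LinearMap.neg_apply, LinearMap.coe_comp, Function.comp_apply,
        LinearMap.restrictScalars_apply, map_neg, lie_neg, Finset.sum_neg_distrib,
        neg_eq_zero]
      have e : ∀ j : Fin g, ⁅TensorAlgebra.ι ℤ (h.symm (b j)),
          L (TensorProduct.map h.symm.toLinearMap h.symm.toLinearMap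
            (μ (h.toLinearMap.dualMap (b.coord j))))⁆
          = Φ h.symm.toLinearMap
              ⁅TensorAlgebra.ι ℤ (b j), L (μ (h.toLinearMap.dualMap (b.coord j)))⁆ := by
        intro j
        rw [Φlie, Φι, ΦL]
        rfl
      simp only [e]
      rw [← map_sum]
      have inner : (∑ j : Fin g, ⁅TensorAlgebra.ι ℤ (b j),
          L (μ (h.toLinearMap.dualMap (b.coord j)))⁆) = 0 := by
        obtain ⟨T, hT⟩ := Tdef h.toLinearMap μ
        have e1 : ∑ j : Fin g, T ((b.map h.symm) j) ((b.map h.symm).coord j)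
            = ∑ j : Fin g, T (b j) (b.coord j) := sum_indep b (b.map h.symm) T
        simp only [Module.Basis.map_apply, coord_map, LinearEquiv.symm_symm, hT, LinearEquiv.coe_coe] at e1
        have e2 : ∀ j : Fin g, h (h.symm (b j)) = b j := fun j => h.apply_symm_apply (b j)
        simp only [e2] at e1
        rw [e1, hμs]
      rw [inner, map_zero]
  end
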